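/- arXiv:1207.2354 — 9 statements merged into one kernel-verified Lean document; each statement's English description precedes it below -/
import Mathlib

section
/- If a symmetric function F of arity r ≥ 2 on a finite domain D factors as F(x_1,...,x_r) = A(x_1)·B(x_2,...,x_r) for a unary function A and an (r-1)-ary function B, then there exists a constant c such that F(x_1,...,x_r) = c·∏_{i=1}^r A(x_i). -/
/-- If a symmetric function `F` of arity `r ≥ 2` (here `r = n+2`) on a finite
domain `D` factors as `F x = A (x 0) * B (x ∘ succ)`, then `F` is a constant
times the product of `A` over all coordinates. -/
theorem stmt_0 {D : Type*} [Fintype D] (n : ℕ)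
    (F : (Fin (n + 2) → D) → ℂ) (A : D → ℂ) (B : (Fin (n + 1) → D) → ℂ)
    (hsym : ∀ (σ : Equiv.Perm (Fin (n + 2))) (x : Fin (n + 2) → D), F (x ∘ σ) = F x)
    (hfac : ∀ x : Fin (n + 2) → D, F x = A (x 0) * B (fun i => x i.succ)) :
    ∃ c : ℂ, ∀ x : Fin (n + 2) → D, F x = c * ∏ i, A (x i) := by
  by_cases h0 : ∀ x, F x = 0
  · exact ⟨0, fun x => by simp [h0 x]⟩
  push_neg at h0
  obtain ⟨y, hy⟩ := h0
  -- F x = A (x i) * B (…)  for any i, by symmetry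
  have hswap : ∀ (x : Fin (n+2) → D) (i : Fin (n+2)),
      F x = A (x i) * B (fun j => x (Equiv.swap 0 i j.succ)) := by
    intro x i
    rw [← hsym (Equiv.swap 0 i) x, hfac]
    simp [Function.comp, Equiv.swap_apply_left]
  -- updating one coordinate
  have hupd : ∀ (x : Fin (n+2) → D) (i : Fin (n+2)) (d : D),
      F (Function.update x i d) * A (x i) = F x * A d := by
    intro x i d
    have h1 := hswap x i
    have h2 := hswap (Function.update x i d) i
    have h3 : (fun j : Fin (n+1) => Function.update x i d (Equiv.swap 0 i j.succ))
        = fun j => x (Equiv.swap 0 i j.succ) := by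
      funext j
      apply Function.update_of_ne
      intro hji
      have : j.succ = (0 : Fin (n+2)) := by
        apply (Equiv.swap 0 i).injective
        rw [hji, Equiv.swap_apply_left]
      exact Fin.succ_ne_zero j this
    rw [h3, Function.update_self] at h2
    rw [h1, h2]; ring
  have hA : ∀ i, A (y i) ≠ 0 := by
    intro i hAi
    rw [hswap y i, hAi, zero_mul] at hy
    exact hy rfl
  have hAprod : (∏ i, A (y i)) ≠ 0 :=
    Finset.prod_ne_zero_iff.2 fun i _ => hA i
  refine ⟨F y / ∏ i, A (y i), fun x => ?_⟩
  -- interpolation chain from y to x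
  set z : ℕ → (Fin (n+2) → D) := fun k j => if (j : ℕ) < k then x j else y j with hz
  have key : ∀ k, k ≤ n + 2 →
      F (z k) * ∏ j ∈ Finset.univ.filter (fun j : Fin (n+2) => (j:ℕ) < k), A (y j)
      = F y * ∏ j ∈ Finset.univ.filter (fun j : Fin (n+2) => (j:ℕ) < k), A (x j) := by
    intro k
    induction k with
    | zero =>
      intro _
      have : z 0 = y := by funext j; simp [hz]
      simp [this]
    | succ k ih =>
      intro hk
      have hk' : k < n + 2 := hk
      have ihh := ih (le_of_lt hk')
      set i : Fin (n+2) := ⟨k, hk'⟩ with hi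
      have hzk : z (k+1) = Function.update (z k) i (x i) := by
        funext j
        rcases eq_or_ne j i with rfl | hji
        · simp [hz, Function.update_self, hi]
        · rw [Function.update_of_ne hji]
          have hjk : (j : ℕ) ≠ k := fun h => hji (Fin.ext h)
          simp only [hz]
          by_cases h : (j : ℕ) < k
          · rw [if_pos (Nat.lt_succ_of_lt h), if_pos h]
          · rw [if_neg h, if_neg (fun h' => h (lt_of_le_of_ne (Nat.lt_succ_iff.1 h') hjk))]
      have hfilter : Finset.univ.filter (fun j : Fin (n+2) => (j:ℕ) < k+1)
          = insert i (Finset.univ.filter (fun j : Fin (n+2) => (j:ℕ) < k)) := by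
        ext j
        simp only [Finset.mem_filter, Finset.mem_univ, true_and, Finset.mem_insert]
        constructor
        · intro h
          rcases Nat.lt_succ_iff_lt_or_eq.1 h with h | h
          · exact Or.inr h
          · exact Or.inl (Fin.ext h)
        · rintro (rfl | h)
          · exact Nat.lt_succ_self k
          · exact Nat.lt_succ_of_lt h
      have hinotmem : i ∉ Finset.univ.filter (fun j : Fin (n+2) => (j:ℕ) < k) := by
        simp [hi]
      have hstep : F (z (k+1)) * A (z k i) = F (z k) * A (x i) := by
        rw [hzk]; exact hupd (z k) i (x i)
      have hzki : z k i = y i := by simp [hz, hi]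
      rw [hzki] at hstep
      rw [hfilter, Finset.prod_insert hinotmem, Finset.prod_insert hinotmem]
      calc F (z (k+1)) * (A (y i) * ∏ j ∈ Finset.univ.filter (fun j : Fin (n+2) => (j:ℕ) < k), A (y j))
          = (F (z (k+1)) * A (y i)) * ∏ j ∈ Finset.univ.filter (fun j : Fin (n+2) => (j:ℕ) < k), A (y j) := by ring
        _ = (F (z k) * A (x i)) * ∏ j ∈ Finset.univ.filter (fun j : Fin (n+2) => (j:ℕ) < k), A (y j) := by rw [hstep]
        _ = A (x i) * (F (z k) * ∏ j ∈ Finset.univ.filter (fun j : Fin (n+2) => (j:ℕ) < k), A (y j)) := by ring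
        _ = A (x i) * (F y * ∏ j ∈ Finset.univ.filter (fun j : Fin (n+2) => (j:ℕ) < k), A (x j)) := by rw [ihh]
        _ = F y * (A (x i) * ∏ j ∈ Finset.univ.filter (fun j : Fin (n+2) => (j:ℕ) < k), A (x j)) := by ring
  have hfull : Finset.univ.filter (fun j : Fin (n+2) => (j:ℕ) < n+2) = Finset.univ := by
    ext j; simp [j.isLt]
  have hzfull : z (n+2) = x := by
    funext j; simp [hz, j.isLt]
  have := key (n+2) le_rfl
  rw [hfull, hzfull] at this
  field_simp
  linear_combination this
end

section
/- If a symmetric function F of arity r+s on a finite domain factors as F = A(x_1,...,x_r)·B(x_{r+1},...,x_{r+s}) with r,s ≥ 1, then there exist a constant c and a unary function C such that F(x_1,...,x_{r+s}) = c·∏_{i=1}^{r+s} C(x_i). In particular, any decomposable symmetric function is a tensor power of a unary function. -/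
/-- If a symmetric function of arity `r + s` (with `r, s ≥ 1`) on a finite
domain decomposes as a product of a function of the first `r` variables and a
function of the last `s` variables, then it is a constant times a tensor power
of a unary function. -/
theorem stmt_1 {D : Type*} [Fintype D] (r s : ℕ) (hr : 1 ≤ r) (hs : 1 ≤ s)
    (F : (Fin (r + s) → D) → ℂ) (A : (Fin r → D) → ℂ) (B : (Fin s → D) → ℂ)
    (hsym : ∀ (σ : Equiv.Perm (Fin (r + s))) (x : Fin (r + s) → D), F (x ∘ σ) = F x)
    (hfac : ∀ x : Fin (r + s) → D,
      F x = A (fun i => x (Fin.castAdd s i)) * B (fun j => x (Fin.natAdd r j))) :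
    ∃ (c : ℂ) (C : D → ℂ), ∀ x : Fin (r + s) → D, F x = c * ∏ i, C (x i) := by
  classical
  by_cases h0 : ∀ x : Fin (r + s) → D, F x = 0
  · exact ⟨0, fun _ => 0, fun x => by simp [h0 x]⟩
  push_neg at h0
  obtain ⟨x0, hx0⟩ := h0
  -- the two distinguished positions
  have hij : Fin.castAdd s (⟨0, hr⟩ : Fin r) ≠ Fin.natAdd r (⟨0, hs⟩ : Fin s) := by
    intro h
    have := congrArg Fin.val h
    simp at this
    omega
  have hne_ca : ∀ (i : Fin r), i ≠ ⟨0, hr⟩ →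
      Fin.castAdd s i ≠ Fin.castAdd s (⟨0, hr⟩ : Fin r) := by
    intro i hi h
    exact hi (Fin.ext (by simpa using congrArg Fin.val h))
  have hne_cn : ∀ (i : Fin r) (j : Fin s), Fin.castAdd s i ≠ Fin.natAdd r j := by
    intro i j h
    have := congrArg Fin.val h
    simp at this
    omega
  have hne_na : ∀ (j : Fin s), j ≠ ⟨0, hs⟩ →
      Fin.natAdd r j ≠ Fin.natAdd r (⟨0, hs⟩ : Fin s) := by
    intro j hj h
    exact hj (Fin.ext (by simpa using congrArg Fin.val h))
  -- the "star" identity: one can exchange the first coordinate of the A-block with the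
  -- first coordinate of the B-block
  have star : ∀ (u : Fin r → D) (v : Fin s → D),
      A u * B v = A (Function.update u ⟨0, hr⟩ (v ⟨0, hs⟩)) *
        B (Function.update v ⟨0, hs⟩ (u ⟨0, hr⟩)) := by
    intro u v
    have h1 := hsym (Equiv.swap (Fin.castAdd s ⟨0, hr⟩) (Fin.natAdd r ⟨0, hs⟩)) (Fin.append u v)
    rw [hfac (Fin.append u v ∘ Equiv.swap (Fin.castAdd s ⟨0, hr⟩) (Fin.natAdd r ⟨0, hs⟩)),
      hfac (Fin.append u v)] at h1
    have e0 : (fun i => Fin.append u v (Fin.castAdd s i)) = u := by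
      funext i; rw [Fin.append_left]
    have e0' : (fun j => Fin.append u v (Fin.natAdd r j)) = v := by
      funext j; rw [Fin.append_right]
    have e1 : (fun i => (Fin.append u v ∘
          Equiv.swap (Fin.castAdd s ⟨0, hr⟩) (Fin.natAdd r ⟨0, hs⟩)) (Fin.castAdd s i)) =
        Function.update u ⟨0, hr⟩ (v ⟨0, hs⟩) := by
      funext i
      by_cases hi : i = ⟨0, hr⟩
      · subst hi
        show Fin.append u v (Equiv.swap _ _ (Fin.castAdd s ⟨0, hr⟩)) = _
        rw [Equiv.swap_apply_left, Fin.append_right, Function.update_self]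
      · show Fin.append u v (Equiv.swap _ _ (Fin.castAdd s i)) = _
        rw [Equiv.swap_apply_of_ne_of_ne (hne_ca i hi) (hne_cn i _), Fin.append_left,
          Function.update_of_ne hi]
    have e2 : (fun j => (Fin.append u v ∘
          Equiv.swap (Fin.castAdd s ⟨0, hr⟩) (Fin.natAdd r ⟨0, hs⟩)) (Fin.natAdd r j)) =
        Function.update v ⟨0, hs⟩ (u ⟨0, hr⟩) := by
      funext j
      by_cases hj : j = ⟨0, hs⟩
      · subst hj
        show Fin.append u v (Equiv.swap _ _ (Fin.natAdd r ⟨0, hs⟩)) = _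
        rw [Equiv.swap_apply_right, Fin.append_left, Function.update_self]
      · show Fin.append u v (Equiv.swap _ _ (Fin.natAdd r j)) = _
        rw [Equiv.swap_apply_of_ne_of_ne (fun h => hne_cn _ _ h.symm) (hne_na j hj),
          Fin.append_right, Function.update_of_ne hj]
    rw [e0, e0', e1, e2] at h1
    exact h1.symm
  -- the reference point and the unary function
  set v0 : Fin s → D := fun j => x0 (Fin.natAdd r j) with hv0
  have hBv0 : B v0 ≠ 0 := by
    have := hfac x0
    rw [this] at hx0
    exact right_ne_zero_of_mul hx0
  set C : D → ℂ := fun a => B (Function.update v0 ⟨0, hs⟩ a) with hC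
  set d₀ : D := x0 (Fin.natAdd r ⟨0, hs⟩) with hd₀
  have hCd₀ : C d₀ ≠ 0 := by
    have h1 : Function.update v0 ⟨0, hs⟩ d₀ = v0 := by
      have h2 : v0 ⟨0, hs⟩ = d₀ := rfl
      rw [← h2, Function.update_eq_self]
    show B (Function.update v0 ⟨0, hs⟩ d₀) ≠ 0
    rw [h1]; exact hBv0
  -- key identity at position `castAdd s 0`
  have key0 : ∀ (x : Fin (r + s) → D) (d : D),
      F (Function.update x (Fin.castAdd s ⟨0, hr⟩) d) * C (x (Fin.castAdd s ⟨0, hr⟩)) =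
        F x * C d := by
    intro x d
    set u : Fin r → D := fun i => x (Fin.castAdd s i) with hu
    set v : Fin s → D := fun j => x (Fin.natAdd r j) with hv
    have e0 : (fun i => Function.update x (Fin.castAdd s ⟨0, hr⟩) d (Fin.castAdd s i)) =
        Function.update u ⟨0, hr⟩ d := by
      funext i
      by_cases hi : i = ⟨0, hr⟩
      · subst hi
        rw [Function.update_self, Function.update_self]
      · rw [Function.update_of_ne (hne_ca i hi), Function.update_of_ne hi]
    have e0' : (fun j => Function.update x (Fin.castAdd s ⟨0, hr⟩) d (Fin.natAdd r j)) = v := by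
      funext j
      rw [Function.update_of_ne (fun h => hne_cn _ _ h.symm)]
    have hxi₀ : x (Fin.castAdd s ⟨0, hr⟩) = u ⟨0, hr⟩ := rfl
    rw [hfac (Function.update x (Fin.castAdd s ⟨0, hr⟩) d), hfac x, e0, e0', hxi₀]
    have hstar := star (Function.update u ⟨0, hr⟩ d)
      (Function.update v0 ⟨0, hs⟩ (u ⟨0, hr⟩))
    simp only [Function.update_self, Function.update_idem] at hstar
    rw [Function.update_eq_self] at hstar
    show A (Function.update u ⟨0, hr⟩ d) * B v * B (Function.update v0 ⟨0, hs⟩ (u ⟨0, hr⟩))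
      = A u * B v * B (Function.update v0 ⟨0, hs⟩ d)
    linear_combination B v * hstar
  -- key identity at any position, via symmetry
  have key : ∀ (x : Fin (r + s) → D) (i : Fin (r + s)) (d : D),
      F (Function.update x i d) * C (x i) = F x * C d := by
    intro x i d
    have hswap : Function.update x i d =
        (Function.update (x ∘ Equiv.swap (Fin.castAdd s ⟨0, hr⟩) i) (Fin.castAdd s ⟨0, hr⟩) d)
          ∘ Equiv.swap (Fin.castAdd s ⟨0, hr⟩) i := by
      funext j
      by_cases hj : j = i
      · subst hj
        simp only [Function.comp_apply]
        rw [Function.update_self, Equiv.swap_apply_right, Function.update_self]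
      · have h2 : Equiv.swap (Fin.castAdd s ⟨0, hr⟩) i j ≠ Fin.castAdd s ⟨0, hr⟩ := by
          intro h
          apply hj
          have := congrArg (Equiv.swap (Fin.castAdd s ⟨0, hr⟩) i) h
          rwa [Equiv.swap_apply_self, Equiv.swap_apply_left] at this
        simp only [Function.comp_apply]
        rw [Function.update_of_ne hj, Function.update_of_ne h2, Function.comp_apply,
          Equiv.swap_apply_self]
    rw [hswap, hsym (Equiv.swap (Fin.castAdd s ⟨0, hr⟩) i)]
    have h1 := key0 (x ∘ Equiv.swap (Fin.castAdd s ⟨0, hr⟩) i) d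
    have h2 : (x ∘ Equiv.swap (Fin.castAdd s ⟨0, hr⟩) i) (Fin.castAdd s ⟨0, hr⟩) = x i := by
      show x (Equiv.swap _ i (Fin.castAdd s ⟨0, hr⟩)) = x i
      rw [Equiv.swap_apply_left]
    rw [h2, hsym (Equiv.swap (Fin.castAdd s ⟨0, hr⟩) i) x] at h1
    exact h1
  -- iterate the key identity over all coordinates
  have main : ∀ (T : Finset (Fin (r + s))) (x : Fin (r + s) → D),
      F x * C d₀ ^ T.card = F (fun i => if i ∈ T then d₀ else x i) * ∏ i ∈ T, C (x i) := by
    intro T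
    induction T using Finset.induction_on with
    | empty => intro x; simp
    | @insert j T hj ih =>
      intro x
      set xT : Fin (r + s) → D := fun i => if i ∈ T then d₀ else x i with hxT
      have hnew : (fun i => if i ∈ insert j T then d₀ else x i) =
          Function.update xT j d₀ := by
        funext i
        by_cases hi : i = j
        · subst hi; simp [hxT]
        · simp [Function.update_of_ne hi, hxT, hi]
      have hk := key xT j d₀
      have hxTj : xT j = x j := by simp [hxT, hj]
      rw [hxTj] at hk
      rw [hnew, Finset.card_insert_of_notMem hj, Finset.prod_insert hj, pow_succ]
      have ihx := ih x
      calc F x * (C d₀ ^ T.card * C d₀)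
          = (F x * C d₀ ^ T.card) * C d₀ := by ring
        _ = (F xT * ∏ i ∈ T, C (x i)) * C d₀ := by rw [ihx]
        _ = (F xT * C d₀) * ∏ i ∈ T, C (x i) := by ring
        _ = (F (Function.update xT j d₀) * C (x j)) * ∏ i ∈ T, C (x i) := by rw [hk]
        _ = F (Function.update xT j d₀) * (C (x j) * ∏ i ∈ T, C (x i)) := by ring
  refine ⟨F (fun _ => d₀) / C d₀ ^ (r + s), C, fun x => ?_⟩
  have hm := main Finset.univ x
  have hcard : (Finset.univ : Finset (Fin (r + s))).card = r + s := by simp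
  have hconst : (fun i : Fin (r + s) => if i ∈ Finset.univ then d₀ else x i) =
      fun _ => d₀ := by funext i; simp
  rw [hcard, hconst] at hm
  have hpow : C d₀ ^ (r + s) ≠ 0 := pow_ne_zero _ hCd₀
  field_simp
  linear_combination hm
end

section
/- Let F : D^4 → ℂ satisfy F(x1,x2,y1,y2) = F(x2,x1,y1,y2) = F(x1,x2,y2,y1). If F(x1,x2,y1,y2) = A(x1)·B(x2,y1,y2) for some unary A and ternary B, then there exist binary functions C and E with F(x1,x2,y1,y2) = C(x1,x2)·E(y1,y2). -/
/-- Partial symmetry decomposition: if `F(x₁,x₂,y₁,y₂)` is symmetric in the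
pair `(x₁,x₂)` and in the pair `(y₁,y₂)`, and `F = A(x₁)·B(x₂,y₁,y₂)`, then
`F = C(x₁,x₂)·E(y₁,y₂)` for some binary functions `C, E`. -/
theorem stmt_2 {D : Type*} [Fintype D]
    (F : D → D → D → D → ℂ) (A : D → ℂ) (B : D → D → D → ℂ)
    (hsym1 : ∀ x1 x2 y1 y2, F x1 x2 y1 y2 = F x2 x1 y1 y2)
    (hsym2 : ∀ x1 x2 y1 y2, F x1 x2 y1 y2 = F x1 x2 y2 y1)
    (hfac : ∀ x1 x2 y1 y2, F x1 x2 y1 y2 = A x1 * B x2 y1 y2) :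
    ∃ (C E : D → D → ℂ), ∀ x1 x2 y1 y2, F x1 x2 y1 y2 = C x1 x2 * E y1 y2 := by
  by_cases h : ∃ a, A a ≠ 0
  · obtain ⟨a, ha⟩ := h
    refine ⟨fun x1 x2 => A x1 * A x2 / A a, fun y1 y2 => B a y1 y2, ?_⟩
    intro x1 x2 y1 y2
    have key : A a * B x2 y1 y2 = A x2 * B a y1 y2 := by
      rw [← hfac, hsym1, hfac]
    rw [hfac]
    field_simp
    linear_combination A x1 * key
  · push_neg at h
    refine ⟨fun _ _ => 0, fun _ _ => 0, ?_⟩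
    intro x1 x2 y1 y2
    rw [hfac, h x1]
    ring
end

section
/- Every 3×3 complex orthogonal matrix T satisfying T·β₀ = β₀, where β₀ = (1/√2)·(1, i, 0)ᵀ, has the form T = [[1+y²/2, i·y²/2, i·y], [i·y²/2, 1−y²/2, −y], [i·y, −y, −1]] for some y ∈ ℂ, or the same matrix with the third column negated. -/
open Matrix Complex

/-- Every complex orthogonal `3×3` matrix fixing `β₀ = (1/√2)(1, i, 0)ᵀ` has
the explicit one-parameter form (or the same with the third column negated). -/
theorem stmt_7 (T : Matrix (Fin 3) (Fin 3) ℂ)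
    (horth : T * Tᵀ = 1)
    (hfix : T.mulVec ![(Real.sqrt 2 : ℂ)⁻¹, Complex.I * (Real.sqrt 2 : ℂ)⁻¹, 0]
      = ![(Real.sqrt 2 : ℂ)⁻¹, Complex.I * (Real.sqrt 2 : ℂ)⁻¹, 0]) :
    ∃ y : ℂ,
      T = !![1 + y ^ 2 / 2, Complex.I * y ^ 2 / 2, Complex.I * y;
             Complex.I * y ^ 2 / 2, 1 - y ^ 2 / 2, -y;
             Complex.I * y, -y, -1] ∨
      T = !![1 + y ^ 2 / 2, Complex.I * y ^ 2 / 2, -(Complex.I * y);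
             Complex.I * y ^ 2 / 2, 1 - y ^ 2 / 2, y;
             Complex.I * y, -y, 1] := by
  have hs : (Real.sqrt 2 : ℂ) ≠ 0 := Complex.ofReal_ne_zero.mpr (by positivity)
  have f0 := congrFun hfix 0
  have f1 := congrFun hfix 1
  have f2 := congrFun hfix 2
  simp only [Matrix.mulVec, dotProduct, Fin.sum_univ_three, Matrix.cons_val_zero,
    Matrix.cons_val_one, Matrix.head_cons, Matrix.cons_val_two, Matrix.tail_cons] at f0 f1 f2
  field_simp at f0 f1 f2
  have e00 := congrFun (congrFun horth 0) 0
  have e02 := congrFun (congrFun horth 0) 2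
  have e11 := congrFun (congrFun horth 1) 1
  have e12 := congrFun (congrFun horth 1) 2
  have e22 := congrFun (congrFun horth 2) 2
  simp [Matrix.mul_apply, Fin.sum_univ_three, Matrix.one_apply] at e00 e02 e11 e12 e22
  have hIsq : Complex.I ^ 2 = -1 := Complex.I_sq
  have hk2 : (T 2 2 - 1) * (T 2 2 + 1) = 0 := by
    linear_combination e22 + (Complex.I * T 2 1 - T 2 0) * f2 - T 2 1 ^ 2 * hIsq
  have hh : T 2 1 = -(-T 2 1) := by ring
  have hg : T 2 0 = Complex.I * -T 2 1 := by linear_combination f2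
  refine ⟨-T 2 1, ?_⟩
  rcases mul_eq_zero.mp hk2 with hk | hk
  · -- k = 1 case : second alternative
    right
    have hk : T 2 2 = 1 := by linear_combination hk
    have hc : T 0 2 = -(Complex.I * -T 2 1) := by
      linear_combination e02 + Complex.I * T 2 1 * f0 - T 0 0 * f2 - T 0 2 * hk -
        T 2 1 * T 0 1 * hIsq
    have hf : T 1 2 = -T 2 1 := by
      linear_combination e12 + Complex.I * T 2 1 * f1 - T 1 0 * f2 - T 1 2 * hk +
        (T 2 1 - T 2 1 * T 1 1) * hIsq
    have hb : T 0 1 = Complex.I * (-T 2 1) ^ 2 / 2 := by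
      linear_combination (Complex.I / 2) * e00 -
        (Complex.I / 2) * (T 0 0 + 1 - Complex.I * T 0 1) * f0 -
        (Complex.I / 2) * (T 0 2 + Complex.I * T 2 1) * hc +
        (T 0 1 - Complex.I * T 0 1 ^ 2 / 2 - Complex.I * T 2 1 ^ 2 / 2) * hIsq
    have he : T 1 1 = 1 - (-T 2 1) ^ 2 / 2 := by
      linear_combination (1 / 2 : ℂ) * e11 -
        (1 / 2 : ℂ) * (T 1 0 + Complex.I - Complex.I * T 1 1) * f1 -
        (1 / 2 : ℂ) * (T 1 2 - T 2 1) * hf +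
        (T 1 1 - T 1 1 ^ 2 / 2 - 1 / 2) * hIsq
    have ha : T 0 0 = 1 + (-T 2 1) ^ 2 / 2 := by
      linear_combination f0 - Complex.I * hb - T 2 1 ^ 2 / 2 * hIsq
    have hd : T 1 0 = Complex.I * (-T 2 1) ^ 2 / 2 := by
      linear_combination f1 - Complex.I * he
    ext i j
    fin_cases i <;> fin_cases j
    · exact ha
    · exact hb
    · exact hc
    · exact hd
    · exact he
    · exact hf
    · exact hg
    · exact hh
    · exact hk
  · -- k = -1 case : first alternative
    left
    have hk : T 2 2 = -1 := by linear_combination hk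
    have hc : T 0 2 = Complex.I * -T 2 1 := by
      linear_combination -e02 - Complex.I * T 2 1 * f0 + T 0 0 * f2 + T 0 2 * hk +
        T 2 1 * T 0 1 * hIsq
    have hf : T 1 2 = -(-T 2 1) := by
      linear_combination -e12 - Complex.I * T 2 1 * f1 + T 1 0 * f2 + T 1 2 * hk -
        (T 2 1 - T 2 1 * T 1 1) * hIsq
    have hb : T 0 1 = Complex.I * (-T 2 1) ^ 2 / 2 := by
      linear_combination (Complex.I / 2) * e00 -
        (Complex.I / 2) * (T 0 0 + 1 - Complex.I * T 0 1) * f0 -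
        (Complex.I / 2) * (T 0 2 - Complex.I * T 2 1) * hc +
        (T 0 1 - Complex.I * T 0 1 ^ 2 / 2 - Complex.I * T 2 1 ^ 2 / 2) * hIsq
    have he : T 1 1 = 1 - (-T 2 1) ^ 2 / 2 := by
      linear_combination (1 / 2 : ℂ) * e11 -
        (1 / 2 : ℂ) * (T 1 0 + Complex.I - Complex.I * T 1 1) * f1 -
        (1 / 2 : ℂ) * (T 1 2 + T 2 1) * hf +
        (T 1 1 - T 1 1 ^ 2 / 2 - 1 / 2) * hIsq
    have ha : T 0 0 = 1 + (-T 2 1) ^ 2 / 2 := by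
      linear_combination f0 - Complex.I * hb - T 2 1 ^ 2 / 2 * hIsq
    have hd : T 1 0 = Complex.I * (-T 2 1) ^ 2 / 2 := by
      linear_combination f1 - Complex.I * he
    ext i j
    fin_cases i <;> fin_cases j
    · exact ha
    · exact hb
    · exact hc
    · exact hd
    · exact he
    · exact hf
    · exact hg
    · exact hh
    · exact hk
end

section
/- If β₁, β₂ ∈ ℂ^3 are both isotropic (⟨β_j, β_j⟩ = 0) and linearly independent, then ⟨β₁, β₂⟩ ≠ 0, and there exists a complex orthogonal 3×3 matrix T such that T·β₁ = β₀ and T·β₂ = ⟨β₁,β₂⟩·β̄₀, where β₀ = (1/√2)(1,i,0)ᵀ and β̄₀ = (1/√2)(1,−i,0)ᵀ. -/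
open Matrix Complex

lemma dep_aux (a b d p q r : ℂ) (hA : a*a+b*b+d*d = 0) (hP : p*p+q*q+r*r = 0)
    (Hc : a*p+b*q+d*r = 0) :
    ∃ x y : ℂ, (x ≠ 0 ∨ y ≠ 0) ∧ x*a+y*p = 0 ∧ x*b+y*q = 0 ∧ x*d+y*r = 0 := by
  have hw0 : b*r - d*q = 0 := by
    have : (b*r - d*q) * (b*r - d*q) = 0 := by
      linear_combination (q*q+r*r)*hA - a*a*hP + (a*p-b*q-d*r)*Hc
    exact mul_self_eq_zero.mp this
  have hw1 : d*p - a*r = 0 := by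
    have : (d*p - a*r) * (d*p - a*r) = 0 := by
      linear_combination (p*p+r*r)*hA - b*b*hP + (b*q-a*p-d*r)*Hc
    exact mul_self_eq_zero.mp this
  have hw2 : a*q - b*p = 0 := by
    have : (a*q - b*p) * (a*q - b*p) = 0 := by
      linear_combination (p*p+q*q)*hA - d*d*hP + (d*r-a*p-b*q)*Hc
    exact mul_self_eq_zero.mp this
  by_cases ha : a = 0
  · by_cases hb : b = 0
    · by_cases hd : d = 0
      · exact ⟨1, 0, Or.inl one_ne_zero, by simp [ha], by simp [hb], by simp [hd]⟩
      · exact ⟨r, -d, Or.inr (neg_ne_zero.mpr hd), by linear_combination -hw1,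
          by linear_combination hw0, by ring⟩
    · exact ⟨q, -b, Or.inr (neg_ne_zero.mpr hb), by linear_combination hw2,
        by ring, by linear_combination -hw0⟩
  · exact ⟨p, -a, Or.inr (neg_ne_zero.mpr ha), by ring,
      by linear_combination -hw2, by linear_combination hw1⟩

set_option maxHeartbeats 2000000 in
/-- Two linearly independent isotropic vectors in `ℂ³` have nonzero bilinear
inner product, and there is a complex orthogonal `T` sending `β₁` to `β₀` and
`β₂` to `⟨β₁,β₂⟩·β̄₀`, where `β₀ = (1/√2)(1,i,0)ᵀ`. -/
theorem stmt_8 (β₁ β₂ : Fin 3 → ℂ)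
    (hiso1 : (∑ i, β₁ i * β₁ i) = 0) (hiso2 : (∑ i, β₂ i * β₂ i) = 0)
    (hind : LinearIndependent ℂ ![β₁, β₂]) :
    (∑ i, β₁ i * β₂ i) ≠ 0 ∧
    ∃ T : Matrix (Fin 3) (Fin 3) ℂ, T * Tᵀ = 1 ∧
      T.mulVec β₁ = ![(Real.sqrt 2 : ℂ)⁻¹, Complex.I * (Real.sqrt 2 : ℂ)⁻¹, 0] ∧
      T.mulVec β₂ = (∑ i, β₁ i * β₂ i) •
        ![(Real.sqrt 2 : ℂ)⁻¹, -(Complex.I * (Real.sqrt 2 : ℂ)⁻¹), 0] := by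
  set a := β₁ 0 with ha0
  set b := β₁ 1 with hb0
  set d := β₁ 2 with hd0
  set p := β₂ 0 with hp0
  set q := β₂ 1 with hq0
  set r := β₂ 2 with hr0
  have hA : a*a+b*b+d*d = 0 := by simpa [Fin.sum_univ_three] using hiso1
  have hP : p*p+q*q+r*r = 0 := by simpa [Fin.sum_univ_three] using hiso2
  have hcomb := LinearIndependent.pair_iff.mp hind
  have hc : a*p+b*q+d*r ≠ 0 := by
    intro Hc
    obtain ⟨x, y, hxy, h0, h1, h2⟩ := dep_aux a b d p q r hA hP Hc
    have hz : x • β₁ + y • β₂ = 0 := by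
      funext i
      fin_cases i <;>
        simp only [Pi.add_apply, Pi.smul_apply, smul_eq_mul, Pi.zero_apply]
      · exact h0
      · exact h1
      · exact h2
    obtain ⟨hx, hy⟩ := hcomb x y hz
    rcases hxy with h | h
    · exact h hx
    · exact h hy
  have hsum : (∑ i, β₁ i * β₂ i) = a*p+b*q+d*r := by rw [Fin.sum_univ_three]
  set c := a*p+b*q+d*r with hcs
  have hS2 : (Real.sqrt 2 : ℂ) * (Real.sqrt 2 : ℂ) = 2 := by
    norm_cast
    rw [Real.mul_self_sqrt] ; norm_num
  have hS0 : (Real.sqrt 2 : ℂ) ≠ 0 := by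
    exact_mod_cast Complex.ofReal_ne_zero.mpr (by positivity)
  set S : ℂ := (Real.sqrt 2 : ℂ)⁻¹ with hSdef
  have hSS : S * S * 2 = 1 := by
    rw [hSdef, ← mul_inv, hS2]
    norm_num
  have hI : Complex.I * Complex.I = -1 := Complex.I_mul_I
  refine ⟨by rw [hsum]; exact hc,
    Matrix.of ![![S/c*(c*a+p), S/c*(c*b+q), S/c*(c*d+r)],
      ![-I*S/c*(c*a-p), -I*S/c*(c*b-q), -I*S/c*(c*d-r)],
      ![-I/c*(b*r-d*q), -I/c*(d*p-a*r), -I/c*(a*q-b*p)]], ?_, ?_, ?_⟩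
  · ext i j
    fin_cases i <;> fin_cases j <;>
      simp only [Matrix.one_fin_three, Matrix.mul_apply, Fin.sum_univ_three,
        Matrix.transpose_apply, Matrix.of_apply, Matrix.cons_val', Matrix.cons_val_zero,
        Matrix.cons_val_one, Matrix.head_cons, Matrix.head_fin_const, Matrix.empty_val',
        Matrix.cons_val_fin_one, Matrix.cons_val_two, Matrix.tail_cons,
        Matrix.vecHead, Matrix.vecTail, Function.comp_apply, Fin.succ_zero_eq_one,
        Fin.succ_one_eq_two, Fin.zero_eta, Fin.mk_one, Fin.reduceFinMk, Matrix.cons_val] <;>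
      field_simp
    · linear_combination S*S*c*c*hA + S*S*hP - 2*S*S*c*hcs + c*c*hSS
    · linear_combination (-Complex.I*S*S*c^2)*hA + Complex.I*S*S*hP
    · ring
    · linear_combination (-Complex.I*S*S*c^2)*hA + Complex.I*S*S*hP
    · linear_combination (S*S*((c*a-p)^2+(c*b-q)^2+(c*d-r)^2))*hI - S*S*c*c*hA
        - S*S*hP - 2*S*S*c*hcs + c*c*hSS
    · ring
    · ring
    · ring
    · linear_combination ((b*r-d*q)^2+(d*p-a*r)^2+(a*q-b*p)^2)*hI
        - (p*p+q*q+r*r)*hA - (a*p+b*q+d*r + c)*hcs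
  · funext i
    fin_cases i <;>
      simp only [Matrix.mulVec, dotProduct, Fin.sum_univ_three,
        Matrix.of_apply, Matrix.cons_val', Matrix.cons_val_zero,
        Matrix.cons_val_one, Matrix.head_cons, Matrix.head_fin_const, Matrix.empty_val',
        Matrix.cons_val_fin_one, Matrix.cons_val_two, Matrix.tail_cons,
        Matrix.vecHead, Matrix.vecTail, Function.comp_apply, Fin.succ_zero_eq_one,
        Fin.succ_one_eq_two, Fin.zero_eta, Fin.mk_one, Fin.reduceFinMk, Matrix.cons_val, ← ha0, ← hb0, ← hd0, ← hp0, ← hq0, ← hr0] <;>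
      field_simp
    · linear_combination S*c*hA - S*hcs
    · linear_combination (-S*c)*hA - S*hcs
    · ring
  · funext i
    fin_cases i <;>
      simp only [Matrix.mulVec, dotProduct, Fin.sum_univ_three, hsum,
        Pi.smul_apply, smul_eq_mul,
        Matrix.of_apply, Matrix.cons_val', Matrix.cons_val_zero,
        Matrix.cons_val_one, Matrix.head_cons, Matrix.head_fin_const, Matrix.empty_val',
        Matrix.cons_val_fin_one, Matrix.cons_val_two, Matrix.tail_cons,
        Matrix.vecHead, Matrix.vecTail, Function.comp_apply, Fin.succ_zero_eq_one,
        Fin.succ_one_eq_two, Fin.zero_eta, Fin.mk_one, Fin.reduceFinMk, Matrix.cons_val, ← ha0, ← hb0, ← hd0, ← hp0, ← hq0, ← hr0] <;>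
      field_simp
    · linear_combination S*hP - S*c*hcs
    · linear_combination S*hP + S*c*hcs
    · ring
end

section
/- Suppose β ∈ ℂ^3 is isotropic, γ ∈ ℂ^3 is not isotropic, {β, γ} is linearly independent, and ⟨β, γ⟩ = 0. Then there exists a complex orthogonal 3×3 matrix T with T·β = β₀ = (1/√2)(1,i,0)ᵀ and T·γ = √⟨γ,γ⟩ · e₃, where e₃ = (0,0,1)ᵀ. -/
open Matrix Complex

private noncomputable def dot3 (u v : Fin 3 → ℂ) : ℂ := ∑ i, u i * v i

private lemma dot3_comm (u v : Fin 3 → ℂ) : dot3 u v = dot3 v u := by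
  simp [dot3, mul_comm]

private lemma dot3_sub_left (u v w : Fin 3 → ℂ) :
    dot3 (u - v) w = dot3 u w - dot3 v w := by
  simp [dot3, sub_mul, Finset.sum_sub_distrib]

private lemma dot3_smul_left (a : ℂ) (u v : Fin 3 → ℂ) :
    dot3 (a • u) v = a * dot3 u v := by
  simp [dot3, Finset.mul_sum, mul_assoc]

/-- If `β ∈ ℂ³` is isotropic, `γ ∈ ℂ³` is not isotropic, `{β, γ}` is linearly
independent and `⟨β,γ⟩ = 0`, then some complex orthogonal `T` sends `β` to
`β₀ = (1/√2)(1,i,0)ᵀ` and `γ` to `√⟨γ,γ⟩·e₃` (for a square root of `⟨γ,γ⟩`). -/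
theorem stmt_9 (β γ : Fin 3 → ℂ)
    (hiso : (∑ i, β i * β i) = 0) (hniso : (∑ i, γ i * γ i) ≠ 0)
    (hind : LinearIndependent ℂ ![β, γ])
    (horth : (∑ i, β i * γ i) = 0) :
    ∃ (T : Matrix (Fin 3) (Fin 3) ℂ) (r : ℂ),
      T * Tᵀ = 1 ∧ r ^ 2 = (∑ i, γ i * γ i) ∧
      T.mulVec β = ![(Real.sqrt 2 : ℂ)⁻¹, Complex.I * (Real.sqrt 2 : ℂ)⁻¹, 0] ∧
      T.mulVec γ = r • ![0, 0, 1] := by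
  classical
  set q : ℂ := ∑ i, γ i * γ i with hqdef
  obtain ⟨r, hr⟩ : ∃ r : ℂ, r ^ 2 = q := IsAlgClosed.exists_pow_nat_eq q (by norm_num)
  have hr0 : r ≠ 0 := by
    intro h
    apply hniso
    rw [← hr, h]; ring
  -- basic dot facts
  have hbb : dot3 β β = 0 := hiso
  have hbc : dot3 β γ = 0 := horth
  have hcb : dot3 γ β = 0 := by rw [dot3_comm]; exact horth
  have hcc : dot3 γ γ = q := rfl
  -- β ≠ 0
  have hβ0 : β ≠ 0 := by
    have := hind.ne_zero 0
    simpa using this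
  obtain ⟨y, hy⟩ : ∃ y : Fin 3 → ℂ, y = fun i => (starRingEnd ℂ) (β i) := ⟨_, rfl⟩
  obtain ⟨n, hn⟩ : ∃ n : ℂ, n = dot3 β y := ⟨_, rfl⟩
  have hnval : n = ((∑ i, Complex.normSq (β i) : ℝ) : ℂ) := by
    rw [hn, hy]
    simp [dot3, Complex.mul_conj]
  have hn0 : n ≠ 0 := by
    rw [hnval, Complex.ofReal_ne_zero]
    obtain ⟨i, hi⟩ := Function.ne_iff.mp hβ0
    have hpos : (0:ℝ) < ∑ i, Complex.normSq (β i) :=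
      Finset.sum_pos' (fun j _ => Complex.normSq_nonneg _)
        ⟨i, Finset.mem_univ i, Complex.normSq_pos.mpr hi⟩
    exact ne_of_gt hpos
  obtain ⟨d1, hd1⟩ : ∃ d : Fin 3 → ℂ, d = n⁻¹ • y := ⟨_, rfl⟩
  obtain ⟨d2, hd2⟩ : ∃ d : Fin 3 → ℂ, d = d1 - ((dot3 d1 γ)/q) • γ := ⟨_, rfl⟩
  obtain ⟨δ, hδ⟩ : ∃ d : Fin 3 → ℂ, d = d2 - ((dot3 d2 d2)/2) • β := ⟨_, rfl⟩
  have hd1b : dot3 d1 β = 1 := by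
    rw [hd1, dot3_smul_left, dot3_comm, ← hn, inv_mul_cancel₀ hn0]
  have hd2b : dot3 d2 β = 1 := by
    rw [hd2, dot3_sub_left, dot3_smul_left, hd1b, hcb]; ring
  have hbd2 : dot3 β d2 = 1 := by rw [dot3_comm]; exact hd2b
  have hd2c : dot3 d2 γ = 0 := by
    rw [hd2, dot3_sub_left, dot3_smul_left, hcc]
    field_simp
    ring
  have hδb : dot3 δ β = 1 := by
    rw [hδ, dot3_sub_left, dot3_smul_left, hd2b, hbb]; ring
  have hδc : dot3 δ γ = 0 := by
    rw [hδ, dot3_sub_left, dot3_smul_left, hd2c, hbc]; ring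
  have hbδ : dot3 β δ = 1 := by rw [dot3_comm]; exact hδb
  have hcδ : dot3 γ δ = 0 := by rw [dot3_comm]; exact hδc
  have hδδ : dot3 δ δ = 0 := by
    rw [hδ, dot3_sub_left, dot3_smul_left, dot3_comm d2, dot3_comm β,
      dot3_sub_left, dot3_smul_left, dot3_sub_left, dot3_smul_left,
      hd2b, hbd2, hbb]
    ring
  -- the special constants and vectors
  obtain ⟨a, ha⟩ : ∃ a : ℂ, a = ((Real.sqrt 2 : ℝ) : ℂ)⁻¹ := ⟨_, rfl⟩
  have haa : a * a = 2⁻¹ := by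
    rw [ha, ← mul_inv]
    norm_cast
    rw [Real.mul_self_sqrt (by norm_num)]
    norm_num
  obtain ⟨b₀, hb₀⟩ : ∃ b : Fin 3 → ℂ, b = ![a, Complex.I * a, 0] := ⟨_, rfl⟩
  obtain ⟨b₁, hb₁⟩ : ∃ b : Fin 3 → ℂ, b = ![a, -(Complex.I * a), 0] := ⟨_, rfl⟩
  obtain ⟨e₃, he₃⟩ : ∃ e : Fin 3 → ℂ, e = ![0, 0, 1] := ⟨_, rfl⟩
  obtain ⟨T, hT⟩ : ∃ T : Matrix (Fin 3) (Fin 3) ℂ,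
      T = Matrix.of (fun i j => b₀ i * δ j + b₁ i * β j + e₃ i * (r⁻¹ * γ j)) := ⟨_, rfl⟩
  have key : ∀ (i : Fin 3) (v : Fin 3 → ℂ),
      ∑ j, T i j * v j = b₀ i * dot3 δ v + b₁ i * dot3 β v + e₃ i * (r⁻¹ * dot3 γ v) := by
    intro i v
    simp only [hT, Matrix.of_apply, dot3, Finset.mul_sum]
    rw [← Finset.sum_add_distrib, ← Finset.sum_add_distrib]
    refine Finset.sum_congr rfl fun j _ => by ring
  have key2 : ∀ (u : Fin 3 → ℂ) (k : Fin 3),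
      dot3 u (fun j => T k j)
        = b₀ k * dot3 u δ + b₁ k * dot3 u β + e₃ k * (r⁻¹ * dot3 u γ) := by
    intro u k
    simp only [hT, Matrix.of_apply, dot3, Finset.mul_sum]
    rw [← Finset.sum_add_distrib, ← Finset.sum_add_distrib]
    refine Finset.sum_congr rfl fun j _ => by ring
  refine ⟨T, r, ?_, hr, ?_, ?_⟩
  · -- orthogonality
    ext i k
    rw [Matrix.mul_apply]
    simp only [Matrix.transpose_apply]
    rw [key i (fun j => T k j), key2 δ k, key2 β k, key2 γ k,
      hδδ, hδb, hδc, hbδ, hbb, hbc, hcδ, hcb, hcc, ← hr]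
    have hrr : r⁻¹ * (r⁻¹ * r ^ 2) = 1 := by field_simp
    have hI : Complex.I * Complex.I = -1 := Complex.I_mul_I
    fin_cases i <;> fin_cases k <;>
      simp only [hb₀, hb₁, he₃, Matrix.one_apply, Matrix.cons_val_zero,
        Matrix.cons_val_one, Matrix.head_cons, Matrix.cons_val_two,
        Matrix.tail_cons] <;>
      simp (config := {decide := false}) [Fin.ext_iff] <;>
      ring_nf <;>
      first
        | linear_combination (2:ℂ) * haa
        | linear_combination (-2*a^2 : ℂ) * Complex.I_sq + (2:ℂ) * haa
        | field_simp
  · -- T β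
    funext i
    have h0 : T.mulVec β i = ∑ j, T i j * β j := rfl
    rw [h0, key i β, hδb, hbb, hcb]
    fin_cases i <;> simp [hb₀, hb₁, he₃, ha]
  · -- T γ
    funext i
    have h0 : T.mulVec γ i = ∑ j, T i j * γ j := rfl
    rw [h0, key i γ, hδc, hbc, hcc, ← hr]
    have h1 : r⁻¹ * r ^ 2 = r := by field_simp
    rw [h1]
    fin_cases i <;> simp [hb₀, hb₁, he₃]
end

section
/- Let X, Y, Z be three linearly independent complex symmetric 3×3 matrices. Then there exist coefficients x, y, z ∈ ℂ such that xX + yY + zZ has rank exactly 2. -/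
open Matrix

lemma exists_det_smul_sub (A B : Matrix (Fin 3) (Fin 3) ℂ) (hB : B.det ≠ 0) :
    ∃ c : ℂ, (c • B - A).det = 0 := by
  have hBu : IsUnit B.det := isUnit_iff_ne_zero.mpr hB
  set C := A * B⁻¹ with hC
  obtain ⟨c, hc⟩ := Module.End.exists_eigenvalue C.mulVecLin
  obtain ⟨v, hv⟩ := hc.exists_hasEigenvector
  refine ⟨c, ?_⟩
  have hv0 : (c • (1 : Matrix (Fin 3) (Fin 3) ℂ) - C) *ᵥ v = 0 := by
    have := hv.apply_eq_smul
    simp only [Matrix.mulVecLin_apply] at this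
    rw [Matrix.sub_mulVec, Matrix.smul_mulVec, Matrix.one_mulVec, this]
    simp
  have hdet : (c • (1 : Matrix (Fin 3) (Fin 3) ℂ) - C).det = 0 :=
    (Matrix.exists_mulVec_eq_zero_iff).mp ⟨v, hv.right, hv0⟩
  have hmul : (c • (1 : Matrix (Fin 3) (Fin 3) ℂ) - C) * B = c • B - A := by
    rw [sub_mul, smul_mul_assoc, one_mul, hC, Matrix.nonsing_inv_mul_cancel_right _ _ hBu]
  calc (c • B - A).det = (c • (1 : Matrix (Fin 3) (Fin 3) ℂ) - C).det * B.det := by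
        rw [← hmul, det_mul]
    _ = 0 := by rw [hdet, zero_mul]

lemma rank_le_two_of_det_eq_zero {M : Matrix (Fin 3) (Fin 3) ℂ} (h : M.det = 0) :
    M.rank ≤ 2 := by
  obtain ⟨v, hv0, hv⟩ := (Matrix.exists_mulVec_eq_zero_iff).mpr h
  have hker : 0 < Module.finrank ℂ (LinearMap.ker M.mulVecLin) := by
    rw [Module.finrank_pos_iff]
    exact ⟨⟨⟨v, by simpa [Matrix.mulVecLin_apply] using hv⟩, 0, by simp [hv0]⟩⟩
  have hrn := LinearMap.finrank_range_add_finrank_ker M.mulVecLin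
  have h3 : Module.finrank ℂ (Fin 3 → ℂ) = 3 := by simp
  rw [h3] at hrn
  have : M.rank = Module.finrank ℂ (LinearMap.range M.mulVecLin) := rfl
  omega

lemma exists_vecMulVec {M : Matrix (Fin 3) (Fin 3) ℂ} (h : M.rank ≤ 1) :
    ∃ u v : Fin 3 → ℂ, M = Matrix.vecMulVec u v := by
  have h' : Module.finrank ℂ (LinearMap.range M.mulVecLin) ≤ 1 := h
  obtain ⟨v₀, hv₀⟩ := finrank_le_one_iff.mp h'
  choose r hr using fun j : Fin 3 =>
    hv₀ ⟨M.mulVec (Pi.single j 1), LinearMap.mem_range.mpr ⟨Pi.single j 1, rfl⟩⟩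
  refine ⟨(v₀ : Fin 3 → ℂ), r, ?_⟩
  ext i j
  have h2 : r j • (v₀ : Fin 3 → ℂ) = M *ᵥ Pi.single j 1 := by
    have := congrArg Subtype.val (hr j)
    simpa using this
  have this : r j * (v₀ : Fin 3 → ℂ) i = (M *ᵥ Pi.single j 1) i := by
    rw [← h2]; simp
  have hMij : M.mulVec (Pi.single j 1) i = M i j := by
    simp [Matrix.mulVec_single]
  rw [Matrix.vecMulVec_apply, ← hMij, ← this]
  ring

lemma symm_rank_one {M : Matrix (Fin 3) (Fin 3) ℂ} (hs : Mᵀ = M) (h : M.rank ≤ 1)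
    (h0 : M ≠ 0) : ∃ (c : ℂ) (w : Fin 3 → ℂ), c ≠ 0 ∧ w ≠ 0 ∧
      M = c • Matrix.vecMulVec w w := by
  obtain ⟨u, v, huv⟩ := exists_vecMulVec h
  -- find nonzero entry
  have hne : ∃ i j, u i * v j ≠ 0 := by
    by_contra hc
    push_neg at hc
    apply h0
    ext i j
    simp [huv, Matrix.vecMulVec_apply, hc i j]
  obtain ⟨i₀, j₀, hij⟩ := hne
  have hu : u i₀ ≠ 0 := fun h => hij (by rw [h]; ring)
  have hv : v j₀ ≠ 0 := fun h => hij (by rw [h]; ring)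
  have hsym : ∀ i j, u i * v j = u j * v i := by
    intro i j
    have := congrFun (congrFun hs i) j
    simp only [huv, Matrix.transpose_apply, Matrix.vecMulVec_apply] at this
    exact this.symm
  have hvi₀ : v i₀ ≠ 0 := by
    intro hz
    have := hsym i₀ j₀
    rw [hz, mul_zero] at this
    exact hij this
  refine ⟨u i₀ / v i₀, v, div_ne_zero hu hvi₀, fun hz => hv (by rw [hz]; rfl), ?_⟩
  ext i j
  have h1 := hsym i₀ i
  rw [huv]
  simp only [Matrix.smul_apply, Matrix.vecMulVec_apply, smul_eq_mul]
  field_simp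
  calc u i * v j * v i₀ = (u i * v i₀) * v j := by ring
    _ = (u i₀ * v i) * v j := by rw [← h1]
    _ = u i₀ * (v i * v j) := by ring
    _ = v j * u i₀ * v i := by ring

lemma rank_sum_two {c₁ c₂ : ℂ} {v₁ v₂ : Fin 3 → ℂ} (hc₁ : c₁ ≠ 0) (hc₂ : c₂ ≠ 0)
    (h : LinearIndependent ℂ ![v₁, v₂]) :
    (c₁ • Matrix.vecMulVec v₁ v₁ + c₂ • Matrix.vecMulVec v₂ v₂).rank = 2 := by
  set Q : Matrix (Fin 2) (Fin 3) ℂ := Matrix.of ![v₁, v₂] with hQdef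
  set R : Matrix (Fin 2) (Fin 3) ℂ := Matrix.of ![c₁ • v₁, c₂ • v₂] with hRdef
  have hN : c₁ • Matrix.vecMulVec v₁ v₁ + c₂ • Matrix.vecMulVec v₂ v₂ = Rᵀ * Q := by
    ext i j
    rw [Matrix.mul_apply]
    simp only [Fin.sum_univ_two, Matrix.transpose_apply]
    simp [hQdef, hRdef, Matrix.vecMulVec_apply]
    ring
  have hQli : LinearIndependent ℂ Q := h
  have hQrank : Q.rank = 2 := by
    rw [hQli.rank_matrix]; simp
  have hQtop : LinearMap.range Q.mulVecLin = ⊤ := by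
    apply Submodule.eq_top_of_finrank_eq
    have : Module.finrank ℂ (LinearMap.range Q.mulVecLin) = Q.rank := rfl
    rw [this, hQrank]; simp
  have hRli : LinearIndependent ℂ R := by
    show LinearIndependent ℂ ![c₁ • v₁, c₂ • v₂]
    rw [LinearIndependent.pair_iff] at h ⊢
    intro s t hst
    have := h (s * c₁) (t * c₂) (by
      rw [← hst]
      show (s * c₁) • v₁ + (t * c₂) • v₂ = s • c₁ • v₁ + t • c₂ • v₂
      rw [smul_smul, smul_smul])
    exact ⟨(mul_eq_zero.mp this.1).resolve_right hc₁,
      (mul_eq_zero.mp this.2).resolve_right hc₂⟩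
  have hRrank : Rᵀ.rank = 2 := by
    rw [Matrix.rank_transpose, hRli.rank_matrix]; simp
  rw [hN]
  show Module.finrank ℂ (LinearMap.range (Rᵀ * Q).mulVecLin) = 2
  rw [Matrix.mulVecLin_mul, LinearMap.range_comp_of_range_eq_top _ hQtop]
  exact hRrank


lemma key {M₁ M₂ : Matrix (Fin 3) (Fin 3) ℂ} (h₁ : M₁ᵀ = M₁) (h₂ : M₂ᵀ = M₂)
    (d₁ : M₁.det = 0) (d₂ : M₂.det = 0)
    (hind : ∀ a b : ℂ, a • M₁ + b • M₂ = 0 → a = 0 ∧ b = 0) :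
    ∃ a b : ℂ, (a • M₁ + b • M₂).rank = 2 := by
  by_cases hr1 : M₁.rank ≤ 1
  · by_cases hr2 : M₂.rank ≤ 1
    · -- both rank ≤ 1
      have hM₁0 : M₁ ≠ 0 := by
        intro h
        have := (hind 1 0 (by simp [h])).1
        simp at this
      have hM₂0 : M₂ ≠ 0 := by
        intro h
        have := (hind 0 1 (by simp [h])).2
        simp at this
      obtain ⟨c₁, v₁, hc₁, hv₁, hd₁⟩ := symm_rank_one h₁ hr1 hM₁0
      obtain ⟨c₂, v₂, hc₂, hv₂, hd₂⟩ := symm_rank_one h₂ hr2 hM₂0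
      have hli : LinearIndependent ℂ ![v₁, v₂] := by
        rw [LinearIndependent.pair_iff]
        by_contra hcon
        push_neg at hcon
        obtain ⟨s, t, hst, hne⟩ := hcon
        have ht : t ≠ 0 := by
          intro h
          have hs : s ≠ 0 := fun hs0 => (hne hs0) h
          rw [h, zero_smul, add_zero] at hst
          rcases smul_eq_zero.mp hst with h' | h'
          · exact hs h'
          · exact hv₁ h' 
        have hv2 : v₂ = (-s * t⁻¹) • v₁ := by
          funext i
          have h := congrFun hst i
          simp only [Pi.add_apply, Pi.smul_apply, smul_eq_mul, Pi.zero_apply] at h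
          rw [Pi.smul_apply, smul_eq_mul]
          linear_combination t⁻¹ * h - v₂ i * inv_mul_cancel₀ ht
        have hM2 : M₂ = (c₂ * (-s * t⁻¹) ^ 2 * c₁⁻¹) • M₁ := by
          rw [hd₂, hd₁, hv2]
          ext i j
          simp only [Matrix.smul_apply, Matrix.vecMulVec_apply, Pi.smul_apply, smul_eq_mul]
          field_simp
        have := (hind (c₂ * (-s * t⁻¹) ^ 2 * c₁⁻¹) (-1) (by rw [hM2, neg_one_smul, add_neg_cancel])).2
        norm_num at this
      exact ⟨1, 1, by
        rw [one_smul, one_smul, hd₁, hd₂]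
        exact rank_sum_two hc₁ hc₂ hli⟩
    · -- M₂ has rank 2
      push_neg at hr2
      refine ⟨0, 1, ?_⟩
      rw [zero_smul, one_smul, zero_add]
      exact le_antisymm (rank_le_two_of_det_eq_zero d₂) hr2
  · push_neg at hr1
    refine ⟨1, 0, ?_⟩
    rw [zero_smul, one_smul, add_zero]
    exact le_antisymm (rank_le_two_of_det_eq_zero d₁) hr1

/-- Given three linearly independent complex symmetric `3×3` matrices, some
linear combination of them has rank exactly `2`. -/
theorem stmt_11 (X Y Z : Matrix (Fin 3) (Fin 3) ℂ)
    (hX : Xᵀ = X) (hY : Yᵀ = Y) (hZ : Zᵀ = Z)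
    (hind : LinearIndependent ℂ ![X, Y, Z]) :
    ∃ x y z : ℂ, (x • X + y • Y + z • Z).rank = 2 := by
  have h3 : ∀ a b c : ℂ, a • X + b • Y + c • Z = 0 → a = 0 ∧ b = 0 ∧ c = 0 := by
    intro a b c h
    have h0 := Fintype.linearIndependent_iff.mp hind ![a, b, c]
    have hsum : ∑ i, (![a, b, c]) i • (![X, Y, Z]) i = a • X + b • Y + c • Z := by
      simp [Fin.sum_univ_three]
    have h1 := h0 (by rw [hsum]; exact h)
    exact ⟨h1 0, h1 1, h1 2⟩
  obtain ⟨a₁, b₁, c₁, a₂, b₂, c₂, hd₁, hd₂, hpair⟩ :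
      ∃ a₁ b₁ c₁ a₂ b₂ c₂ : ℂ,
        (a₁ • X + b₁ • Y + c₁ • Z).det = 0 ∧ (a₂ • X + b₂ • Y + c₂ • Z).det = 0 ∧
        ∀ s t : ℂ, s • (a₁ • X + b₁ • Y + c₁ • Z) + t • (a₂ • X + b₂ • Y + c₂ • Z) = 0 →
          s = 0 ∧ t = 0 := by
    by_cases hZ0 : Z.det = 0
    · by_cases hY0 : Y.det = 0
      · refine ⟨0, 0, 1, 0, 1, 0, ?_, ?_, ?_⟩
        · have e : (0:ℂ) • X + (0:ℂ) • Y + (1:ℂ) • Z = Z := by module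
          rw [e]; exact hZ0
        · have e : (0:ℂ) • X + (1:ℂ) • Y + (0:ℂ) • Z = Y := by module
          rw [e]; exact hY0
        · intro s t h
          have e : s • ((0:ℂ) • X + (0:ℂ) • Y + (1:ℂ) • Z)
              + t • ((0:ℂ) • X + (1:ℂ) • Y + (0:ℂ) • Z)
              = (0:ℂ) • X + t • Y + s • Z := by module
          rw [e] at h
          obtain ⟨-, h2, h3'⟩ := h3 0 t s h
          exact ⟨h3', h2⟩
      · obtain ⟨c, hc⟩ := exists_det_smul_sub X Y hY0
        refine ⟨-1, c, 0, 0, 0, 1, ?_, ?_, ?_⟩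
        · have e : (-1:ℂ) • X + c • Y + (0:ℂ) • Z = c • Y - X := by module
          rw [e]; exact hc
        · have e : (0:ℂ) • X + (0:ℂ) • Y + (1:ℂ) • Z = Z := by module
          rw [e]; exact hZ0
        · intro s t h
          have e : s • ((-1:ℂ) • X + c • Y + (0:ℂ) • Z)
              + t • ((0:ℂ) • X + (0:ℂ) • Y + (1:ℂ) • Z)
              = (-s) • X + (s * c) • Y + t • Z := by module
          rw [e] at h
          obtain ⟨h1, -, h2⟩ := h3 (-s) (s * c) t h
          exact ⟨by simpa using neg_eq_zero.mp h1, h2⟩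
    · obtain ⟨u₁, hu₁⟩ := exists_det_smul_sub X Z hZ0
      obtain ⟨u₂, hu₂⟩ := exists_det_smul_sub Y Z hZ0
      refine ⟨-1, 0, u₁, 0, -1, u₂, ?_, ?_, ?_⟩
      · have e : (-1:ℂ) • X + (0:ℂ) • Y + u₁ • Z = u₁ • Z - X := by module
        rw [e]; exact hu₁
      · have e : (0:ℂ) • X + (-1:ℂ) • Y + u₂ • Z = u₂ • Z - Y := by module
        rw [e]; exact hu₂
      · intro s t h
        have e : s • ((-1:ℂ) • X + (0:ℂ) • Y + u₁ • Z)
            + t • ((0:ℂ) • X + (-1:ℂ) • Y + u₂ • Z)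
            = (-s) • X + (-t) • Y + (s * u₁ + t * u₂) • Z := by module
        rw [e] at h
        obtain ⟨h1, h2, -⟩ := h3 (-s) (-t) (s * u₁ + t * u₂) h
        exact ⟨neg_eq_zero.mp h1, neg_eq_zero.mp h2⟩
  have hs₁ : (a₁ • X + b₁ • Y + c₁ • Z)ᵀ = a₁ • X + b₁ • Y + c₁ • Z := by
    simp [Matrix.transpose_add, Matrix.transpose_smul, hX, hY, hZ]
  have hs₂ : (a₂ • X + b₂ • Y + c₂ • Z)ᵀ = a₂ • X + b₂ • Y + c₂ • Z := by
    simp [Matrix.transpose_add, Matrix.transpose_smul, hX, hY, hZ]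
  obtain ⟨s, t, hrank⟩ := key hs₁ hs₂ hd₁ hd₂ hpair
  refine ⟨s * a₁ + t * a₂, s * b₁ + t * b₂, s * c₁ + t * c₂, ?_⟩
  have e : (s * a₁ + t * a₂) • X + (s * b₁ + t * b₂) • Y + (s * c₁ + t * c₂) • Z
      = s • (a₁ • X + b₁ • Y + c₁ • Z) + t • (a₂ • X + b₂ • Y + c₂ • Z) := by module
  rw [e]
  exact hrank
end

section
/- Let F = α^{⊗3} + β^{⊗3} + γ^{⊗3} where α, β, γ ∈ ℂ³ are pairwise orthogonal under the bilinear form ⟨u,v⟩ = ∑ u_i v_i, and suppose rank{α,β,γ} = 3. Then none of α, β, γ is isotropic, and there exists a complex orthogonal matrix T and constants λ, μ, ν ∈ ℂ such that T^{⊗3}F = λ·e₁^{⊗3} + μ·e₂^{⊗3} + ν·e₃^{⊗3}. -/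
open Matrix

lemma aux_zero16 (α β γ δ : Fin 3 → ℂ)
    (hind : LinearIndependent ℂ ![α, β, γ])
    (h1 : ∑ i, δ i * α i = 0) (h2 : ∑ i, δ i * β i = 0)
    (h3 : ∑ i, δ i * γ i = 0) : δ = 0 := by
  have hspan : Submodule.span ℂ (Set.range ![α, β, γ]) = ⊤ := by
    apply LinearIndependent.span_eq_top_of_card_eq_finrank hind
    simp
  let f : (Fin 3 → ℂ) →ₗ[ℂ] ℂ := ∑ i, δ i • LinearMap.proj i
  have hf : ∀ v, f v = ∑ i, δ i * v i := by
    intro v; simp [f]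
  have hf0 : f = 0 := by
    apply LinearMap.ext_on hspan
    rintro x ⟨i, rfl⟩
    fin_cases i <;> simp [hf, h1, h2, h3]
  funext i
  have := LinearMap.congr_fun hf0 (Pi.single i 1)
  rw [hf] at this
  simpa [Pi.single_apply] using this

set_option maxHeartbeats 2000000 in
/-- If `F = α^{⊗3} + β^{⊗3} + γ^{⊗3}` with `α, β, γ ∈ ℂ³` pairwise orthogonal
under the bilinear form and linearly independent, then none of them is
isotropic, and an orthogonal transformation brings `F` to
`λ·e₁^{⊗3} + μ·e₂^{⊗3} + ν·e₃^{⊗3}`. -/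
theorem stmt_16 (α β γ : Fin 3 → ℂ)
    (hab : (∑ i, α i * β i) = 0) (hac : (∑ i, α i * γ i) = 0)
    (hbc : (∑ i, β i * γ i) = 0)
    (hind : LinearIndependent ℂ ![α, β, γ])
    (F : Fin 3 → Fin 3 → Fin 3 → ℂ)
    (hF : ∀ i j k, F i j k = α i * α j * α k + β i * β j * β k + γ i * γ j * γ k)
    (e₁ e₂ e₃ : Fin 3 → ℂ)
    (he₁ : e₁ = ![1, 0, 0]) (he₂ : e₂ = ![0, 1, 0]) (he₃ : e₃ = ![0, 0, 1]) :
    ((∑ i, α i * α i) ≠ 0 ∧ (∑ i, β i * β i) ≠ 0 ∧ (∑ i, γ i * γ i) ≠ 0) ∧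
    ∃ (T : Matrix (Fin 3) (Fin 3) ℂ) (lam mu nu : ℂ),
      T * Tᵀ = 1 ∧
      ∀ i j k : Fin 3,
        (∑ i' : Fin 3, ∑ j' : Fin 3, ∑ k' : Fin 3,
          T i i' * T j j' * T k k' * F i' j' k')
        = lam * (e₁ i * e₁ j * e₁ k)
        + mu * (e₂ i * e₂ j * e₂ k)
        + nu * (e₃ i * e₃ j * e₃ k) := by
  have hba : ∑ i, β i * α i = 0 := by
    rw [← hab]; exact Finset.sum_congr rfl (fun i _ => mul_comm _ _)
  have hca : ∑ i, γ i * α i = 0 := by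
    rw [← hac]; exact Finset.sum_congr rfl (fun i _ => mul_comm _ _)
  have hcb : ∑ i, γ i * β i = 0 := by
    rw [← hbc]; exact Finset.sum_congr rfl (fun i _ => mul_comm _ _)
  have hαne : α ≠ 0 := by
    have := hind.ne_zero 0; simpa using this
  have hβne : β ≠ 0 := by
    have := hind.ne_zero 1; simpa using this
  have hγne : γ ≠ 0 := by
    have := hind.ne_zero 2; simpa using this
  have hqa : (∑ i, α i * α i) ≠ 0 := fun h => hαne (aux_zero16 α β γ α hind h hab hac)
  have hqb : (∑ i, β i * β i) ≠ 0 := fun h => hβne (aux_zero16 α β γ β hind hba h hbc)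
  have hqc : (∑ i, γ i * γ i) ≠ 0 := fun h => hγne (aux_zero16 α β γ γ hind hca hcb h)
  refine ⟨⟨hqa, hqb, hqc⟩, ?_⟩
  obtain ⟨sa, hsa⟩ := IsAlgClosed.exists_pow_nat_eq (k := ℂ) (∑ i, α i * α i) (n := 2) (by norm_num)
  obtain ⟨sb, hsb⟩ := IsAlgClosed.exists_pow_nat_eq (k := ℂ) (∑ i, β i * β i) (n := 2) (by norm_num)
  obtain ⟨sc, hsc⟩ := IsAlgClosed.exists_pow_nat_eq (k := ℂ) (∑ i, γ i * γ i) (n := 2) (by norm_num)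
  have hsa0 : sa ≠ 0 := by intro h; apply hqa; rw [← hsa, h]; ring
  have hsb0 : sb ≠ 0 := by intro h; apply hqb; rw [← hsb, h]; ring
  have hsc0 : sc ≠ 0 := by intro h; apply hqc; rw [← hsc, h]; ring
  have hsa' : α 0 * α 0 + α 1 * α 1 + α 2 * α 2 = sa ^ 2 := by
    rw [hsa, Fin.sum_univ_three]
  have hsb' : β 0 * β 0 + β 1 * β 1 + β 2 * β 2 = sb ^ 2 := by
    rw [hsb, Fin.sum_univ_three]
  have hsc' : γ 0 * γ 0 + γ 1 * γ 1 + γ 2 * γ 2 = sc ^ 2 := by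
    rw [hsc, Fin.sum_univ_three]
  have hab' : α 0 * β 0 + α 1 * β 1 + α 2 * β 2 = 0 := by
    rw [← Fin.sum_univ_three (fun i => α i * β i)]; exact hab
  have hac' : α 0 * γ 0 + α 1 * γ 1 + α 2 * γ 2 = 0 := by
    rw [← Fin.sum_univ_three (fun i => α i * γ i)]; exact hac
  have hbc' : β 0 * γ 0 + β 1 * γ 1 + β 2 * γ 2 = 0 := by
    rw [← Fin.sum_univ_three (fun i => β i * γ i)]; exact hbc
  set T : Matrix (Fin 3) (Fin 3) ℂ :=
    Matrix.of ![fun j => sa⁻¹ * α j, fun j => sb⁻¹ * β j, fun j => sc⁻¹ * γ j] with hT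
  refine ⟨T, sa ^ 3, sb ^ 3, sc ^ 3, ?_, ?_⟩
  · ext i j
    rw [Matrix.mul_apply]
    fin_cases i <;> fin_cases j <;>
      simp only [hT, Fin.sum_univ_three, Matrix.transpose_apply, Matrix.of_apply,
        Matrix.cons_val', Matrix.cons_val_zero, Matrix.cons_val_one, Matrix.head_cons,
        Matrix.cons_val_fin_one, Matrix.head_fin_const, Matrix.empty_val',
        Matrix.cons_val_two, Matrix.tail_cons, Matrix.one_apply, Fin.isValue] <;>
      norm_num [Fin.ext_iff] <;>
      first
        | (field_simp; linear_combination hsa')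
        | (field_simp; linear_combination hsb')
        | (field_simp; linear_combination hsc')
        | linear_combination (sa⁻¹ * sb⁻¹) * hab'
        | linear_combination (sa⁻¹ * sc⁻¹) * hac'
        | linear_combination (sb⁻¹ * sc⁻¹) * hbc'
  · have hA : ∀ i, (∑ i', T i i' * α i') = sa * e₁ i := by
      intro i
      fin_cases i <;>
        simp only [hT, Fin.sum_univ_three, he₁, Matrix.of_apply, Matrix.cons_val',
          Matrix.cons_val_zero, Matrix.cons_val_one, Matrix.head_cons,
          Matrix.cons_val_two, Matrix.tail_cons, Fin.isValue] <;>
        norm_num [Fin.ext_iff]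
      · field_simp; linear_combination hsa'
      · linear_combination sb⁻¹ * hab'
      · linear_combination sc⁻¹ * hac'
    have hB : ∀ i, (∑ i', T i i' * β i') = sb * e₂ i := by
      intro i
      fin_cases i <;>
        simp only [hT, Fin.sum_univ_three, he₂, Matrix.of_apply, Matrix.cons_val',
          Matrix.cons_val_zero, Matrix.cons_val_one, Matrix.head_cons,
          Matrix.cons_val_two, Matrix.tail_cons, Fin.isValue] <;>
        norm_num [Fin.ext_iff]
      · linear_combination sa⁻¹ * hab'
      · field_simp; linear_combination hsb'
      · linear_combination sc⁻¹ * hbc'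
    have hC : ∀ i, (∑ i', T i i' * γ i') = sc * e₃ i := by
      intro i
      fin_cases i <;>
        simp only [hT, Fin.sum_univ_three, he₃, Matrix.of_apply, Matrix.cons_val',
          Matrix.cons_val_zero, Matrix.cons_val_one, Matrix.head_cons,
          Matrix.cons_val_two, Matrix.tail_cons, Fin.isValue] <;>
        norm_num [Fin.ext_iff]
      · linear_combination sa⁻¹ * hac'
      · linear_combination sb⁻¹ * hbc'
      · field_simp; linear_combination hsc'
    intro i j k
    have key : (∑ i' : Fin 3, ∑ j' : Fin 3, ∑ k' : Fin 3,
          T i i' * T j j' * T k k' * F i' j' k')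
        = (∑ i', T i i' * α i') * (∑ j', T j j' * α j') * (∑ k', T k k' * α k')
        + (∑ i', T i i' * β i') * (∑ j', T j j' * β j') * (∑ k', T k k' * β k')
        + (∑ i', T i i' * γ i') * (∑ j', T j j' * γ j') * (∑ k', T k k' * γ k') := by
      simp only [hF, Fin.sum_univ_three]
      ring
    rw [key, hA i, hA j, hA k, hB i, hB j, hB k, hC i, hC j, hC k]
    ring
end

section
/- Let H be a field (or integral domain) and let [f_0, f_1, f_2] = [1, b, c] be a symmetric binary Boolean signature with c ≠ b². Define M = [[1, b], [0, √(c−b²)]]. Then the covariant transform of binary equality satisfies Mᵀ·I₂·M = [[1,b],[b,c]], and the contravariant transform M^{⊗3} applied to the symmetric ternary signature [a, 1, 0, 0] (i.e., a·e₀^{⊗3} + Sym(e₀^{⊗2}⊗e₁)) equals the symmetric signature [a+3b, √(c−b²), 0, 0]. -/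
open Matrix

/-- For a nondegenerate binary signature `[1, b, c]` (`c ≠ b²`) and
`M = [[1, b], [0, √(c−b²)]]` (with `r² = c − b²` a fixed square root), the
covariant transform of binary equality satisfies `Mᵀ·I₂·M = [[1,b],[b,c]]`,
and the contravariant transform `M^{⊗3}` of the symmetric ternary signature
`[a, 1, 0, 0]` is `[a+3b, √(c−b²), 0, 0]`. -/
theorem stmt_19 (a b c r : ℂ) (hc : c ≠ b ^ 2) (hr : r ^ 2 = c - b ^ 2)
    (M : Matrix (Fin 2) (Fin 2) ℂ) (hM : M = !![1, b; 0, r])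
    (S : Fin 2 → Fin 2 → Fin 2 → ℂ)
    (hS : ∀ x y z, S x y z =
      if (x : ℕ) + (y : ℕ) + (z : ℕ) = 0 then a
      else if (x : ℕ) + (y : ℕ) + (z : ℕ) = 1 then 1 else 0) :
    Mᵀ * (1 : Matrix (Fin 2) (Fin 2) ℂ) * M = !![1, b; b, c] ∧
    ∀ x y z : Fin 2,
      (∑ x' : Fin 2, ∑ y' : Fin 2, ∑ z' : Fin 2,
        M x x' * M y y' * M z z' * S x' y' z')
      = if (x : ℕ) + (y : ℕ) + (z : ℕ) = 0 then a + 3 * b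
        else if (x : ℕ) + (y : ℕ) + (z : ℕ) = 1 then r else 0 := by
  subst hM
  constructor
  · ext i j
    fin_cases i <;> fin_cases j <;>
      simp [Matrix.mul_apply, Fin.sum_univ_two, Matrix.transpose_apply, Matrix.vecHead, Matrix.vecTail] <;> ring_nf <;>
      linear_combination hr
  · intro x y z
    fin_cases x <;> fin_cases y <;> fin_cases z <;>
      simp [Fin.sum_univ_two, hS] <;> ring
end
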